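/- Let A and B be nonempty sets, K a compact subset of the Banach space ℓ^∞ = lp (fun _ : ℕ => ℝ) ∞, ε > 0, and f : A × B → K an ε-stable function. Let p : B → K belong to the closure of {fun b => f(a, b) : a ∈ A} in the product topology on B → K, and let q : A → K belong to the closure of {fun a => f(a, b) : b ∈ B} in the product topology on A → K. Then for every γ > 0 there exist n, m ∈ ℕ, points a₀, …, a_{n−1} ∈ A and b₀, …, b_{m−1} ∈ B, and continuous maps u : (Fin n → K) → ℓ^∞ and v : (Fin m → K) → ℓ^∞ such that (i) ‖u(fun i => f(aᵢ, b)) − p(b)‖ ≤ 2ε + γ/2 for all b ∈ B, (ii) ‖v(fun j => f(a, bⱼ)) − q(a)‖ ≤ 2ε + γ/2 for all a ∈ A, and (iii) ‖u(fun i => q(aᵢ)) − v(fun j => p(bⱼ))‖ ≤ 5ε + γ. -/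

import Mathlib

open ENNReal Filter Metric Set

local notation "𝔼" => lp (fun _ : ℕ => ℝ) ∞

set_option linter.unusedVariables false

/-- Build a continuous "definition" function from a determination property. -/
private lemma buildU {B : Type*} {K : Set 𝔼} (hK : IsCompact K) {n : ℕ}
    (g : B → (Fin n → K)) (Pv : B → 𝔼) {η D : ℝ} (hη : 0 < η) (hD : 0 ≤ D)
    (hdet : ∀ b b', (∀ i, ‖((g b i : 𝔼)) - g b' i‖ ≤ η) → ‖Pv b - Pv b'‖ ≤ D) :
    ∃ u : (Fin n → K) → 𝔼, Continuous u ∧ ∀ b, ‖u (g b) - Pv b‖ ≤ D := by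
  classical
  haveI : CompactSpace ↥K := isCompact_iff_compactSpace.mp hK
  obtain ⟨t, htf, htcov⟩ := (Metric.totallyBounded_iff.mp
    (isCompact_univ (X := Fin n → ↥K)).totallyBounded) (η/6) (by positivity)
  set T : Finset (Fin n → ↥K) := htf.toFinset with hT
  set φ : (Fin n → ↥K) → (Fin n → ↥K) → ℝ := fun y x => max (η/3 - dist x y) 0 with hφ
  have hφ0 : ∀ y x, 0 ≤ φ y x := fun y x => le_max_right _ _
  set val : (Fin n → ↥K) → 𝔼 := fun y =>
    if h : ∃ b, dist (g b) y < η/3 then Pv h.choose else 0 with hval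
  set S : (Fin n → ↥K) → ℝ := fun x => ∑ y ∈ T, φ y x with hSdef
  have hS : ∀ x, 0 < S x := by
    intro x
    obtain ⟨y, hyt, hxy⟩ := Set.mem_iUnion₂.mp (htcov (Set.mem_univ x))
    refine Finset.sum_pos' (fun y _ => hφ0 y x) ⟨y, htf.mem_toFinset.mpr hyt, ?_⟩
    have : dist x y < η/6 := by simpa [Metric.mem_ball] using hxy
    have h1 : 0 < η/3 - dist x y := by
      have : (0:ℝ) ≤ dist x y := dist_nonneg
      linarith
    exact lt_max_of_lt_left h1
  have hφc : ∀ y, Continuous (fun x => φ y x) := fun y =>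
    ((continuous_const.sub (continuous_id.dist continuous_const)).max continuous_const)
  have hSc : Continuous S := continuous_finset_sum _ (fun y _ => hφc y)
  refine ⟨fun x => (S x)⁻¹ • ∑ y ∈ T, φ y x • val y, ?_, ?_⟩
  · exact (hSc.inv₀ (fun x => (hS x).ne')).smul
      (continuous_finset_sum _ fun y _ => (hφc y).smul continuous_const)
  · intro b
    set x := g b with hx
    have key : ∀ y ∈ T, φ y x * ‖val y - Pv b‖ ≤ φ y x * D := by
      intro y _
      rcases le_or_gt (η/3 - dist x y) 0 with h0 | h0
      · have h1 : φ y x = 0 := max_eq_right h0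
        rw [h1, zero_mul, zero_mul]
      · have hxy : dist x y < η/3 := by linarith
        have hex : ∃ b', dist (g b') y < η/3 := ⟨b, hxy⟩
        have hvy : val y = Pv hex.choose := dif_pos hex
        have hch : dist (g hex.choose) y < η/3 := hex.choose_spec
        have hbb : ∀ i, ‖((g b i : 𝔼)) - g hex.choose i‖ ≤ η := by
          intro i
          have h1 : dist (g b) (g hex.choose) ≤ dist x y + dist (g hex.choose) y := by
            rw [hx]; exact (dist_triangle _ _ _).trans (by rw [dist_comm y])
          have h2 : dist (g b i) (g hex.choose i) ≤ dist (g b) (g hex.choose) :=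
            dist_le_pi_dist _ _ i
          have h3 : dist (g b i) (g hex.choose i) = ‖((g b i : 𝔼)) - g hex.choose i‖ := by
            rw [Subtype.dist_eq, dist_eq_norm]
          linarith
        have := hdet b hex.choose hbb
        rw [hvy, norm_sub_rev]
        exact mul_le_mul_of_nonneg_left this (hφ0 y x)
    have hsum : ∑ y ∈ T, φ y x • val y - (S x) • Pv b
        = ∑ y ∈ T, φ y x • (val y - Pv b) := by
      rw [hSdef, Finset.sum_smul]
      rw [← Finset.sum_sub_distrib]
      congr 1; ext y; rw [smul_sub]
    have heq : (S x)⁻¹ • ∑ y ∈ T, φ y x • val y - Pv b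
        = (S x)⁻¹ • (∑ y ∈ T, φ y x • (val y - Pv b)) := by
      rw [← hsum, smul_sub, smul_smul, inv_mul_cancel₀ (hS x).ne', one_smul]
    calc ‖(S x)⁻¹ • ∑ y ∈ T, φ y x • val y - Pv b‖
        = (S x)⁻¹ * ‖∑ y ∈ T, φ y x • (val y - Pv b)‖ := by
          rw [heq, norm_smul, Real.norm_eq_abs, abs_of_pos (inv_pos.mpr (hS x))]
      _ ≤ (S x)⁻¹ * ∑ y ∈ T, φ y x * ‖val y - Pv b‖ := by
          refine mul_le_mul_of_nonneg_left ?_ (inv_nonneg.mpr (hS x).le)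
          refine (norm_sum_le _ _).trans (le_of_eq ?_)
          congr 1; ext y
          rw [norm_smul, Real.norm_eq_abs, abs_of_nonneg (hφ0 y x)]
      _ ≤ (S x)⁻¹ * ∑ y ∈ T, φ y x * D := by
          refine mul_le_mul_of_nonneg_left (Finset.sum_le_sum key) (inv_nonneg.mpr (hS x).le)
      _ = D := by
          rw [← Finset.sum_mul]
          show (S x)⁻¹ * (S x * D) = D
          rw [← mul_assoc, inv_mul_cancel₀ (hS x).ne', one_mul]

private lemma core {A B : Type*} {K : Set 𝔼} (f : A × B → K) (p : B → K)
    {ε η : ℝ} (hη : 0 < η)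
    (hf : ¬ ∃ (a : ℕ → A) (b : ℕ → B), ∀ i j : ℕ, i < j →
      ε ≤ ‖(f (a i, b j) : 𝔼) - f (a j, b i)‖)
    (W : Ultrafilter ℕ) (hW : (W : Filter ℕ) ≤ Filter.cofinite)
    (aa : ℕ → A) (cc : ℕ → B) (V : ℕ → 𝔼) (PP : 𝔼) (I : Set ℕ)
    (hI : I.Infinite)
    (hfar : ∀ i ∈ I, ε + 3*η ≤ ‖V i - PP‖)
    (hconv : ∀ i, {k | ‖(f (aa i, cc k) : 𝔼) - V i‖ ≤ η} ∈ W)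
    (hPc : {k | ‖(p (cc k) : 𝔼) - PP‖ ≤ η} ∈ W)
    (happ : ∀ i k, k < i → ‖(f (aa i, cc k) : 𝔼) - p (cc k)‖ ≤ η) : False := by
  classical
  have hWinf : ∀ s ∈ W, s.Infinite := by
    intro s hs
    by_contra hfin
    rw [Set.not_infinite] at hfin
    have h1 : sᶜ ∈ W := hW (by rw [Filter.mem_cofinite, compl_compl]; exact hfin)
    have h2 : s ∩ sᶜ ∈ W := W.inter_sets hs h1
    rw [Set.inter_compl_self] at h2
    exact Filter.empty_notMem (W : Filter ℕ) h2
  set Sh : ℕ → Set ℕ := fun n => {k | ‖(p (cc k) : 𝔼) - PP‖ ≤ η ∧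
    ∀ i, i ≤ n → i ∈ I → ‖(f (aa i, cc k) : 𝔼) - V i‖ ≤ η} with hShdef
  have hSh : ∀ n, Sh n ∈ W := by
    intro n
    have heq : Sh n = {k | ‖(p (cc k) : 𝔼) - PP‖ ≤ η} ∩
        ⋂ i ∈ Set.Iic n, {k | i ∈ I → ‖(f (aa i, cc k) : 𝔼) - V i‖ ≤ η} := by
      ext k
      simp only [hShdef, Set.mem_setOf_eq, Set.mem_inter_iff, Set.mem_iInter, Set.mem_Iic]
    rw [heq]
    refine W.inter_sets hPc ((Filter.biInter_mem (Set.finite_Iic n)).mpr ?_)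
    intro i _
    by_cases hiI : i ∈ I
    · exact Filter.mem_of_superset (hconv i) (fun k hk _ => hk)
    · exact Filter.mem_of_superset Filter.univ_mem (fun k _ h => (hiI h).elim)
  have hgt : ∀ (s : Set ℕ), s.Infinite → ∀ n, ∃ m ∈ s, n < m := by
    intro s hs n
    obtain ⟨m, hm, hm2⟩ := hs.exists_notMem_finite (Set.finite_le_nat n)
    exact ⟨m, hm, not_le.mp (by simpa using hm2)⟩
  have hstep : ∀ ik : ℕ × ℕ, ∃ jk : ℕ × ℕ, jk.1 ∈ I ∧ max ik.1 ik.2 < jk.1 ∧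
      jk.2 ∈ Sh jk.1 ∧ ik.2 < jk.2 := by
    rintro ⟨i, k⟩
    obtain ⟨i', hi'I, hi'⟩ := hgt _ hI (max i k)
    obtain ⟨k', hk'S, hk'⟩ := hgt _ (hWinf _ (hSh i')) k
    exact ⟨(i', k'), hi'I, hi', hk'S, hk'⟩
  choose step hstep1 hstep2 hstep3 hstep4 using hstep
  obtain ⟨i₀, hi₀⟩ := hI.nonempty
  obtain ⟨k₀, hk₀⟩ := (hWinf _ (hSh i₀)).nonempty
  set g : ℕ → ℕ × ℕ := fun m => Nat.rec (i₀, k₀) (fun _ ik => step ik) m with hg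
  have hgsucc : ∀ m, g (m+1) = step (g m) := fun m => rfl
  have hgI : ∀ m, (g m).1 ∈ I := by
    intro m
    cases m with
    | zero => exact hi₀
    | succ m => rw [hgsucc]; exact hstep1 (g m)
  have hgS : ∀ m, (g m).2 ∈ Sh (g m).1 := by
    intro m
    cases m with
    | zero => exact hk₀
    | succ m => rw [hgsucc]; exact hstep3 (g m)
  have hmono1 : StrictMono (fun m => (g m).1) := by
    apply strictMono_nat_of_lt_succ
    intro m
    exact lt_of_le_of_lt (le_max_left _ _) (hstep2 (g m))
  have hmono2 : StrictMono (fun m => (g m).2) := by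
    apply strictMono_nat_of_lt_succ
    intro m
    exact hstep4 (g m)
  have hcross : ∀ m m', m < m' → (g m).2 < (g m').2 ∧ (g m).2 < (g m').1 ∧
      (g m).1 < (g m').1 := by
    intro m m' hmm'
    refine ⟨hmono2 hmm', ?_, hmono1 hmm'⟩
    have h1 : (g m).2 ≤ (g (m'-1)).2 := by
      rcases Nat.eq_or_lt_of_le (Nat.le_sub_one_of_lt hmm') with h | h
      · rw [h]
      · exact (hmono2 h).le
    have h2 : (g (m'-1)).2 < (g ((m'-1)+1)).1 :=
      lt_of_le_of_lt (le_max_right _ _) (hstep2 (g (m'-1)))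
    have h3 : (m'-1)+1 = m' := Nat.succ_pred_eq_of_pos (Nat.zero_lt_of_lt hmm')
    rw [h3] at h2
    exact lt_of_le_of_lt h1 h2
  apply hf
  refine ⟨fun m => aa ((g m).1), fun m => cc ((g m).2), ?_⟩
  intro m m' hmm'
  obtain ⟨hk, hki, hii⟩ := hcross m m' hmm'
  have h1 : ‖(f (aa ((g m).1), cc ((g m').2)) : 𝔼) - V ((g m).1)‖ ≤ η :=
    (hgS m').2 _ hii.le (hgI m)
  have h2 : ‖(f (aa ((g m').1), cc ((g m).2)) : 𝔼) - p (cc ((g m).2))‖ ≤ η :=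
    happ _ _ hki
  have h3 : ‖(p (cc ((g m).2)) : 𝔼) - PP‖ ≤ η := (hgS m).1
  have h4 : ε + 3*η ≤ ‖V ((g m).1) - PP‖ := hfar _ (hgI m)
  set x1 : 𝔼 := (f (aa ((g m).1), cc ((g m').2)) : 𝔼)
  set x2 : 𝔼 := (f (aa ((g m').1), cc ((g m).2)) : 𝔼)
  have t1 : ‖V ((g m).1) - PP‖ ≤ ‖V ((g m).1) - x1‖ + ‖x1 - x2‖ +
      ‖x2 - (p (cc ((g m).2)) : 𝔼)‖ + ‖(p (cc ((g m).2)) : 𝔼) - PP‖ := by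
    rw [← dist_eq_norm, ← dist_eq_norm, ← dist_eq_norm, ← dist_eq_norm, ← dist_eq_norm]
    exact (dist_triangle4 _ x1 x2 _).trans (by
      have := dist_triangle x2 (p (cc ((g m).2)) : 𝔼) PP
      linarith [dist_triangle4 (V ((g m).1)) x1 x2 (p (cc ((g m).2)) : 𝔼)])
  have h1' : ‖V ((g m).1) - x1‖ ≤ η := by rw [norm_sub_rev]; exact h1
  linarith

private lemma det_row {A B : Type*} {K : Set 𝔼} (hK : IsCompact K)
    (f : A × B → K) (p : B → K) {ε : ℝ} (hε : 0 ≤ ε)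
    (hf : ¬ ∃ (a : ℕ → A) (b : ℕ → B), ∀ i j : ℕ, i < j →
      ε ≤ ‖(f (a i, b j) : 𝔼) - f (a j, b i)‖)
    (hap : ∀ (s : Finset B) (δ : ℝ), 0 < δ → ∃ a : A, ∀ b ∈ s, ‖(f (a, b) : 𝔼) - p b‖ ≤ δ)
    {η : ℝ} (hη : 0 < η) :
    ∃ (n : ℕ) (a : Fin n → A), ∀ b b' : B,
      (∀ i, ‖(f (a i, b) : 𝔼) - f (a i, b')‖ ≤ η) →
      ‖(p b : 𝔼) - p b'‖ ≤ 2*ε + 8*η := by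
  classical
  by_contra hcon
  push_neg at hcon
  -- build the sequence of triples
  set P : A × B × B → Prop := fun x =>
    (‖(f (x.1, x.2.1) : 𝔼) - f (x.1, x.2.2)‖ ≤ η) ∧ 2*ε + 8*η < ‖(p x.2.1 : 𝔼) - p x.2.2‖
    with hPdef
  set r : A × B × B → A × B × B → Prop := fun x y =>
    (‖(f (y.1, x.2.1) : 𝔼) - p x.2.1‖ ≤ η) ∧ (‖(f (y.1, x.2.2) : 𝔼) - p x.2.2‖ ≤ η) ∧
    (‖(f (x.1, y.2.1) : 𝔼) - f (x.1, y.2.2)‖ ≤ η) with hrdef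
  obtain ⟨seq, hseqP, hseqr⟩ := exists_seq_of_forall_finset_exists P r (by
    intro s _
    set sb : Finset B := s.image (fun x => x.2.1) ∪ s.image (fun x => x.2.2) with hsb
    obtain ⟨a0, ha0⟩ := hap sb η hη
    set l : List A := a0 :: (s.toList.map (fun x => x.1)) with hl
    obtain ⟨b, b', hmatch, hfar⟩ := hcon l.length l.get
    refine ⟨(a0, b, b'), ⟨?_, hfar⟩, ?_⟩
    · have h0 : l.get ⟨0, by simp [hl]⟩ = a0 := rfl
      have := hmatch ⟨0, by simp [hl]⟩
      rwa [h0] at this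
    · intro x hx
      refine ⟨ha0 _ ?_, ha0 _ ?_, ?_⟩
      · exact Finset.mem_union_left _ (Finset.mem_image_of_mem _ hx)
      · exact Finset.mem_union_right _ (Finset.mem_image_of_mem _ hx)
      · have hxl : x.1 ∈ l := by
          rw [hl]
          exact List.mem_cons_of_mem _ (List.mem_map.mpr ⟨x, Finset.mem_toList.mpr hx, rfl⟩)
        obtain ⟨idx, hidx⟩ := List.mem_iff_get.mp hxl
        have := hmatch idx
        rwa [hidx] at this)
  set aa : ℕ → A := fun i => (seq i).1 with haa
  set bb : ℕ → B := fun k => (seq k).2.1 with hbb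
  set bb' : ℕ → B := fun k => (seq k).2.2 with hbb'
  have Hm : ∀ i k, i ≤ k → ‖(f (aa i, bb k) : 𝔼) - f (aa i, bb' k)‖ ≤ η := by
    intro i k hik
    rcases Nat.eq_or_lt_of_le hik with h | h
    · subst h; exact (hseqP i).1
    · exact (hseqr i k h).2.2
  have Ha : ∀ i k, k < i →
      ‖(f (aa i, bb k) : 𝔼) - p (bb k)‖ ≤ η ∧ ‖(f (aa i, bb' k) : 𝔼) - p (bb' k)‖ ≤ η := by
    intro i k hki
    exact ⟨(hseqr k i hki).1, (hseqr k i hki).2.1⟩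
  have Hfar : ∀ k, 2*ε + 8*η < ‖(p (bb k) : 𝔼) - p (bb' k)‖ := fun k => (hseqP k).2
  -- ultrafilter limits
  set W : Ultrafilter ℕ := Filter.hyperfilter ℕ with hWdef
  have hWle : (W : Filter ℕ) ≤ Filter.cofinite := Filter.hyperfilter_le_cofinite
  have hlim : ∀ (x : ℕ → K), ∃ L : 𝔼, Filter.Tendsto (fun k => (x k : 𝔼)) W (nhds L) := by
    intro x
    obtain ⟨L, _, hL⟩ := hK.ultrafilter_le_nhds (W.map (fun k => (x k : 𝔼))) (by
      rw [Ultrafilter.coe_map, Filter.le_principal_iff]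
      exact Filter.mem_map.mpr (Filter.mem_of_superset Filter.univ_mem (fun k _ => (x k).2)))
    exact ⟨L, hL⟩
  have hmem : ∀ (y : ℕ → 𝔼) (L : 𝔼), Filter.Tendsto y W (nhds L) →
      ∀ δ : ℝ, 0 < δ → {k | ‖y k - L‖ ≤ δ} ∈ W := by
    intro y L hL δ hδ
    have := Metric.tendsto_nhds.mp hL δ hδ
    refine Filter.mem_of_superset this (fun k hk => ?_)
    rw [Set.mem_setOf_eq, ← dist_eq_norm]
    exact le_of_lt hk
  obtain ⟨V, hV⟩ := Classical.axiomOfChoice (fun i => hlim (fun k => f (aa i, bb k)))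
  obtain ⟨V', hV'⟩ := Classical.axiomOfChoice (fun i => hlim (fun k => f (aa i, bb' k)))
  obtain ⟨PP, hPP⟩ := hlim (fun k => p (bb k))
  obtain ⟨PP', hPP'⟩ := hlim (fun k => p (bb' k))
  -- ‖V i - V' i‖ ≤ η
  have hVV' : ∀ i, ‖V i - V' i‖ ≤ η := by
    intro i
    refine le_of_forall_pos_le_add ?_
    intro δ hδ
    have hs1 := hmem _ _ (hV i) (δ/2) (by positivity)
    have hs2 := hmem _ _ (hV' i) (δ/2) (by positivity)
    have hs3 : {k | i ≤ k} ∈ W := hWle (by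
      rw [Filter.mem_cofinite]
      have hcompl : {k : ℕ | i ≤ k}ᶜ = {k | k < i} := by
        ext k; simp [Set.mem_compl_iff, not_le]
      rw [hcompl]; exact Set.finite_lt_nat i)
    obtain ⟨k, hk⟩ := Filter.nonempty_of_mem (W.inter_sets (W.inter_sets hs1 hs2) hs3)
    obtain ⟨⟨hk1, hk2⟩, hk3⟩ := hk
    simp only [Set.mem_setOf_eq] at hk1 hk2 hk3
    have hk4 : ‖(f (aa i, bb k) : 𝔼) - f (aa i, bb' k)‖ ≤ η := Hm i k hk3
    have t : ‖V i - V' i‖ ≤ ‖V i - (f (aa i, bb k) : 𝔼)‖ +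
        ‖(f (aa i, bb k) : 𝔼) - f (aa i, bb' k)‖ + ‖(f (aa i, bb' k) : 𝔼) - V' i‖ := by
      rw [← dist_eq_norm, ← dist_eq_norm, ← dist_eq_norm, ← dist_eq_norm]
      exact dist_triangle4 _ _ _ _
    rw [norm_sub_rev] at hk1
    linarith
  have hPPsep : 2*ε + 8*η ≤ ‖PP - PP'‖ := by
    by_contra hlt
    push_neg at hlt
    set δ := (2*ε + 8*η - ‖PP - PP'‖)/2 with hδdef
    have hδ : 0 < δ := by rw [hδdef]; linarith
    have hs1 := hmem _ _ hPP δ hδ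
    have hs2 := hmem _ _ hPP' δ hδ
    obtain ⟨k, hk1, hk2⟩ := Filter.nonempty_of_mem (W.inter_sets hs1 hs2)
    simp only [Set.mem_setOf_eq] at hk1 hk2
    have t : ‖(p (bb k) : 𝔼) - p (bb' k)‖ ≤ ‖(p (bb k) : 𝔼) - PP‖ + ‖PP - PP'‖ +
        ‖PP' - (p (bb' k) : 𝔼)‖ := by
      rw [← dist_eq_norm, ← dist_eq_norm, ← dist_eq_norm, ← dist_eq_norm]
      exact dist_triangle4 _ _ _ _
    rw [norm_sub_rev] at hk2
    have := Hfar k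
    rw [hδdef] at hk1 hk2
    linarith
  -- coloring
  set Ib : Set ℕ := {i | ε + 4*η ≤ ‖V i - PP‖} with hIbdef
  have hsplit : Ib.Infinite ∨ Ibᶜ.Infinite := by
    by_contra hboth
    push_neg at hboth
    have := hboth.1.union hboth.2
    rw [Set.union_compl_self] at this
    exact Set.infinite_univ this
  rcases hsplit with hIb | hIb
  · exact core f p hη hf W hWle aa bb V PP Ib hIb
      (fun i hi => le_trans (by linarith) hi)
      (fun i => hmem _ _ (hV i) η hη) (hmem _ _ hPP η hη)
      (fun i k hki => (Ha i k hki).1)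
  · refine core f p hη hf W hWle aa bb' V' PP' Ibᶜ hIb ?_
      (fun i => hmem _ _ (hV' i) η hη) (hmem _ _ hPP' η hη)
      (fun i k hki => (Ha i k hki).2)
    intro i hi
    have h1 : ‖V i - PP‖ < ε + 4*η := by
      rw [Set.mem_compl_iff, hIbdef, Set.mem_setOf_eq, not_le] at hi
      exact hi
    have t : ‖PP - PP'‖ ≤ ‖PP - V i‖ + ‖V i - V' i‖ + ‖V' i - PP'‖ := by
      rw [← dist_eq_norm, ← dist_eq_norm, ← dist_eq_norm, ← dist_eq_norm]
      exact dist_triangle4 _ _ _ _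
    have h2 : ‖PP - V i‖ < ε + 4*η := by rw [norm_sub_rev]; exact h1
    have h3 := hVV' i
    linarith

private lemma symPair {A B : Type*} {K : Set 𝔼} (f : A × B → K) (p : B → K) (q : A → K)
    {ε η : ℝ} (hη : 0 < η)
    (hf : ¬ ∃ (a : ℕ → A) (b : ℕ → B), ∀ i j : ℕ, i < j →
      ε ≤ ‖(f (a i, b j) : 𝔼) - f (a j, b i)‖)
    (hap : ∀ (s : Finset B) (δ : ℝ), 0 < δ → ∃ a : A, ∀ b ∈ s, ‖(f (a, b) : 𝔼) - p b‖ ≤ δ)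
    (haq : ∀ (s : Finset A) (δ : ℝ), 0 < δ → ∃ b : B, ∀ a ∈ s, ‖(f (a, b) : 𝔼) - q a‖ ≤ δ)
    {n m : ℕ} (a : Fin n → A) (bt : Fin m → B) :
    ∃ (as : A) (bs : B), (∀ i, ‖(f (a i, bs) : 𝔼) - q (a i)‖ ≤ η) ∧
      (∀ j, ‖(f (as, bt j) : 𝔼) - p (bt j)‖ ≤ η) ∧
      ‖(q as : 𝔼) - p bs‖ ≤ ε + 2*η := by
  classical
  set P : A × B → Prop := fun x =>
    (∀ i, ‖(f (a i, x.2) : 𝔼) - q (a i)‖ ≤ η) ∧ (∀ j, ‖(f (x.1, bt j) : 𝔼) - p (bt j)‖ ≤ η)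
    with hPdef
  set r : A × B → A × B → Prop := fun x y =>
    (‖(f (x.1, y.2) : 𝔼) - q x.1‖ ≤ η) ∧ (‖(f (y.1, x.2) : 𝔼) - p x.2‖ ≤ η) with hrdef
  obtain ⟨seq, hseqP, hseqr⟩ := exists_seq_of_forall_finset_exists P r (by
    intro s _
    set sa : Finset A := (Finset.univ.image a) ∪ s.image (fun x => x.1) with hsa
    obtain ⟨b0, hb0⟩ := haq sa η hη
    set sb : Finset B := (Finset.univ.image bt) ∪ s.image (fun x => x.2) with hsb
    obtain ⟨a0, ha0⟩ := hap sb η hη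
    refine ⟨(a0, b0), ⟨?_, ?_⟩, ?_⟩
    · intro i
      exact hb0 _ (Finset.mem_union_left _ (Finset.mem_image_of_mem _ (Finset.mem_univ i)))
    · intro j
      exact ha0 _ (Finset.mem_union_left _ (Finset.mem_image_of_mem _ (Finset.mem_univ j)))
    · intro x hx
      refine ⟨hb0 _ ?_, ha0 _ ?_⟩
      · exact Finset.mem_union_right _ (Finset.mem_image_of_mem _ hx)
      · exact Finset.mem_union_right _ (Finset.mem_image_of_mem _ hx))
  by_cases hex : ∃ k, ‖(q (seq k).1 : 𝔼) - p (seq k).2‖ ≤ ε + 2*η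
  · obtain ⟨k, hk⟩ := hex
    exact ⟨(seq k).1, (seq k).2, (hseqP k).1, (hseqP k).2, hk⟩
  · push_neg at hex
    exfalso
    apply hf
    refine ⟨fun k => (seq k).1, fun k => (seq k).2, ?_⟩
    intro i j hij
    obtain ⟨h1, h2⟩ := hseqr i j hij
    have hsep := hex i
    have t : ‖(q (seq i).1 : 𝔼) - p (seq i).2‖ ≤
        ‖(q (seq i).1 : 𝔼) - f ((seq i).1, (seq j).2)‖ +
        ‖(f ((seq i).1, (seq j).2) : 𝔼) - f ((seq j).1, (seq i).2)‖ +
        ‖(f ((seq j).1, (seq i).2) : 𝔼) - p (seq i).2‖ := by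
      rw [← dist_eq_norm, ← dist_eq_norm, ← dist_eq_norm, ← dist_eq_norm]
      exact dist_triangle4 _ _ _ _
    rw [norm_sub_rev] at h1
    linarith

theorem stmt6 {A B : Type*} [Nonempty A] [Nonempty B]
    (K : Set (lp (fun _ : ℕ => ℝ) ∞)) (hK : IsCompact K)
    (ε : ℝ) (hε : 0 < ε) (f : A × B → K)
    (hf : ¬ ∃ (a : ℕ → A) (b : ℕ → B), ∀ i j : ℕ, i < j →
      ε ≤ ‖(f (a i, b j) : lp (fun _ : ℕ => ℝ) ∞) - f (a j, b i)‖)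
    (p : B → K) (hp : p ∈ closure {g : B → K | ∃ a : A, g = fun b => f (a, b)})
    (q : A → K) (hq : q ∈ closure {g : A → K | ∃ b : B, g = fun a => f (a, b)})
    (γ : ℝ) (hγ : 0 < γ) :
    ∃ (n m : ℕ) (a : Fin n → A) (b : Fin m → B)
      (u : (Fin n → K) → lp (fun _ : ℕ => ℝ) ∞)
      (v : (Fin m → K) → lp (fun _ : ℕ => ℝ) ∞),
      Continuous u ∧ Continuous v ∧
      (∀ b' : B, ‖u (fun i => f (a i, b')) - (p b' : lp (fun _ : ℕ => ℝ) ∞)‖ ≤ 2 * ε + γ / 2) ∧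
      (∀ a' : A, ‖v (fun j => f (a', b j)) - (q a' : lp (fun _ : ℕ => ℝ) ∞)‖ ≤ 2 * ε + γ / 2) ∧
      ‖u (fun i => q (a i)) - v (fun j => p (b j))‖ ≤ 5 * ε + γ := by
  classical
  -- approximant interfaces from closures
  have hap : ∀ (s : Finset B) (δ : ℝ), 0 < δ → ∃ a : A, ∀ b ∈ s,
      ‖(f (a, b) : 𝔼) - p b‖ ≤ δ := by
    intro s δ hδ
    have hU : IsOpen {g : B → K | ∀ b ∈ s, dist (g b) (p b) < δ} := by
      have heq : {g : B → K | ∀ b ∈ s, dist (g b) (p b) < δ} =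
          ⋂ b ∈ (s : Set B), (fun g : B → K => g b) ⁻¹' (Metric.ball (p b) δ) := by
        ext g; simp [Metric.mem_ball]
      rw [heq]
      exact Set.Finite.isOpen_biInter s.finite_toSet
        (fun b _ => Metric.isOpen_ball.preimage (continuous_apply b))
    have hpU : p ∈ {g : B → K | ∀ b ∈ s, dist (g b) (p b) < δ} := by
      intro b _; simp [hδ]
    obtain ⟨g, hgU, hgS⟩ := _root_.mem_closure_iff.mp hp _ hU hpU
    obtain ⟨a, rfl⟩ := hgS
    refine ⟨a, fun b hb => ?_⟩
    have := hgU b hb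
    rw [Subtype.dist_eq, dist_eq_norm] at this
    exact this.le
  have haq : ∀ (s : Finset A) (δ : ℝ), 0 < δ → ∃ b : B, ∀ a ∈ s,
      ‖(f (a, b) : 𝔼) - q a‖ ≤ δ := by
    intro s δ hδ
    have hU : IsOpen {g : A → K | ∀ a ∈ s, dist (g a) (q a) < δ} := by
      have heq : {g : A → K | ∀ a ∈ s, dist (g a) (q a) < δ} =
          ⋂ a ∈ (s : Set A), (fun g : A → K => g a) ⁻¹' (Metric.ball (q a) δ) := by
        ext g; simp [Metric.mem_ball]
      rw [heq]
      exact Set.Finite.isOpen_biInter s.finite_toSet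
        (fun a _ => Metric.isOpen_ball.preimage (continuous_apply a))
    have hqU : q ∈ {g : A → K | ∀ a ∈ s, dist (g a) (q a) < δ} := by
      intro a _; simp [hδ]
    obtain ⟨g, hgU, hgS⟩ := _root_.mem_closure_iff.mp hq _ hU hqU
    obtain ⟨b, rfl⟩ := hgS
    refine ⟨b, fun a ha => ?_⟩
    have := hgU a ha
    rw [Subtype.dist_eq, dist_eq_norm] at this
    exact this.le
  -- flipped f and hf
  set F : B × A → K := fun x => f (x.2, x.1) with hF
  have hfF : ¬ ∃ (b : ℕ → B) (a : ℕ → A), ∀ i j : ℕ, i < j →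
      ε ≤ ‖(F (b i, a j) : 𝔼) - F (b j, a i)‖ := by
    rintro ⟨bs, as, h⟩
    exact hf ⟨as, bs, fun i j hij => by
      have := h i j hij
      rwa [norm_sub_rev] at this⟩
  -- determination tuples
  obtain ⟨n, a, hdetp⟩ := det_row hK f p hε.le hf hap (η := γ/32) (by positivity)
  obtain ⟨m, bt, hdetq⟩ := det_row hK F q hε.le hfF haq (η := γ/32) (by positivity)
  -- build u and v
  obtain ⟨u, hucont, hu⟩ := buildU hK (fun b => fun i => f (a i, b)) (fun b => (p b : 𝔼))
    (η := γ/32) (D := 2*ε + 8*(γ/32)) (by positivity) (by positivity)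
    (fun b b' hb => hdetp b b' hb)
  obtain ⟨v, hvcont, hv⟩ := buildU hK (fun a' => fun j => F (bt j, a')) (fun a' => (q a' : 𝔼))
    (η := γ/32) (D := 2*ε + 8*(γ/32)) (by positivity) (by positivity)
    (fun a1 a2 ha => hdetq a1 a2 ha)
  -- uniform continuity moduli
  haveI : CompactSpace ↥K := isCompact_iff_compactSpace.mp hK
  have huu : UniformContinuous u := CompactSpace.uniformContinuous_of_continuous hucont
  have hvu : UniformContinuous v := CompactSpace.uniformContinuous_of_continuous hvcont
  obtain ⟨δu, hδu, hδu'⟩ := Metric.uniformContinuous_iff.mp huu (γ/8) (by positivity)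
  obtain ⟨δv, hδv, hδv'⟩ := Metric.uniformContinuous_iff.mp hvu (γ/8) (by positivity)
  set η₃ : ℝ := min (min δu δv) (γ/16) / 2 with hη₃def
  have hη₃ : 0 < η₃ := by
    rw [hη₃def]
    have : 0 < min (min δu δv) (γ/16) := lt_min (lt_min hδu hδv) (by positivity)
    linarith
  have hη₃u : η₃ < δu := by
    rw [hη₃def]
    have h1 : min (min δu δv) (γ/16) ≤ δu := le_trans (min_le_left _ _) (min_le_left _ _)
    have : 0 < min (min δu δv) (γ/16) := lt_min (lt_min hδu hδv) (by positivity)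
    linarith
  have hη₃v : η₃ < δv := by
    rw [hη₃def]
    have h1 : min (min δu δv) (γ/16) ≤ δv := le_trans (min_le_left _ _) (min_le_right _ _)
    have : 0 < min (min δu δv) (γ/16) := lt_min (lt_min hδu hδv) (by positivity)
    linarith
  have hη₃γ : η₃ ≤ γ/32 := by
    rw [hη₃def]
    have h1 : min (min δu δv) (γ/16) ≤ γ/16 := min_le_right _ _
    linarith
  -- symmetry
  obtain ⟨as, bs, hqa, hpb, hsep⟩ := symPair f p q hη₃ hf hap haq a bt
  refine ⟨n, m, a, bt, u, v, hucont, hvcont, ?_, ?_, ?_⟩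
  · intro b'
    have := hu b'
    refine this.trans ?_
    linarith
  · intro a'
    have := hv a'
    refine this.trans ?_
    linarith
  · -- final chain
    have t1 : dist (u (fun i => q (a i))) (u (fun i => f (a i, bs))) < γ/8 := by
      refine hδu' ?_
      rw [dist_pi_lt_iff hδu]
      intro i
      rw [Subtype.dist_eq, dist_eq_norm]
      calc ‖(q (a i) : 𝔼) - f (a i, bs)‖ = ‖(f (a i, bs) : 𝔼) - q (a i)‖ := norm_sub_rev _ _
        _ ≤ η₃ := hqa i
        _ < δu := hη₃u
    have t2 : ‖u (fun i => f (a i, bs)) - (p bs : 𝔼)‖ ≤ 2*ε + 8*(γ/32) := hu bs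
    have t3 : ‖(p bs : 𝔼) - q as‖ ≤ ε + 2*η₃ := by rw [norm_sub_rev]; exact hsep
    have t4 : ‖v (fun j => f (as, bt j)) - (q as : 𝔼)‖ ≤ 2*ε + 8*(γ/32) := hv as
    have t5 : dist (v (fun j => p (bt j))) (v (fun j => f (as, bt j))) < γ/8 := by
      refine hδv' ?_
      rw [dist_pi_lt_iff hδv]
      intro j
      rw [Subtype.dist_eq, dist_eq_norm]
      calc ‖(p (bt j) : 𝔼) - f (as, bt j)‖ = ‖(f (as, bt j) : 𝔼) - p (bt j)‖ := norm_sub_rev _ _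
        _ ≤ η₃ := hpb j
        _ < δv := hη₃v
    have t2' : dist (u fun i => f (a i, bs)) ((p bs : 𝔼)) ≤ 2*ε + 8*(γ/32) := by
      rw [dist_eq_norm]; exact t2
    have t3' : dist ((p bs : 𝔼)) ((q as : 𝔼)) ≤ ε + 2*η₃ := by
      rw [dist_eq_norm]; exact t3
    have t4' : dist (v fun j => f (as, bt j)) ((q as : 𝔼)) ≤ 2*ε + 8*(γ/32) := by
      rw [dist_eq_norm]; exact t4
    rw [← dist_eq_norm]
    have d1 := dist_triangle4 (u fun i => q (a i)) (u fun i => f (a i, bs))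
      ((p bs : 𝔼)) ((q as : 𝔼))
    have d2 : dist ((q as : 𝔼)) (v fun j => p (bt j)) ≤
        dist (v fun j => f (as, bt j)) ((q as : 𝔼)) +
        dist (v fun j => p (bt j)) (v fun j => f (as, bt j)) := by
      calc dist ((q as : 𝔼)) (v fun j => p (bt j))
          ≤ dist ((q as : 𝔼)) (v fun j => f (as, bt j)) +
            dist (v fun j => f (as, bt j)) (v fun j => p (bt j)) := dist_triangle _ _ _
        _ = _ := by
            rw [dist_comm ((q as : 𝔼)) (v fun j => f (as, bt j)),
              dist_comm (v fun j => f (as, bt j)) (v fun j => p (bt j))]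
    have d3 := dist_triangle (u fun i => q (a i)) ((q as : 𝔼)) (v fun j => p (bt j))
    have hfin : (2*ε + 8*(γ/32)) + (2*ε + 8*(γ/32)) + (ε + 2*η₃) + γ/8 + γ/8 ≤ 5*ε + γ := by
      have := hη₃γ
      linarith
    linarith
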